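/- arXiv:2101.06028 — 3 statements merged into one kernel-verified Lean document; each statement's English description precedes it below -/
import Mathlib

section
/- For the single-user energy-efficiency constraint log₂(1 + h² p / σ²) / p ≥ e^min with h, σ², e^min > 0, there exists P > 0 such that the constraint holds for p ∈ (0, P] and fails for p > P; i.e., the feasible set of powers is an interval (0, P]. -/
open Real Set Filter

private lemma L_strictAnti {c : ℝ} (hc : 0 < c) {p q : ℝ} (hp : 0 < p) (hpq : p < q) :
    Real.log (1 + c * q) / q < Real.log (1 + c * p) / p := by
  have hq : 0 < q := hp.trans hpq
  have hb : (0:ℝ) < p / q := div_pos hp hq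
  have hb1 : p / q < 1 := (div_lt_one hq).2 hpq
  have hmem1 : (1:ℝ) ∈ Ioi (0:ℝ) := by norm_num
  have hmem2 : (1 + c * q) ∈ Ioi (0:ℝ) := by simp only [mem_Ioi]; nlinarith
  have hne : (1:ℝ) ≠ 1 + c * q := by nlinarith
  have key := strictConcaveOn_log_Ioi.2 hmem1 hmem2 hne
    (show (0:ℝ) < 1 - p / q by linarith) hb (by ring)
  have hqe : q ≠ 0 := hq.ne'
  have hcomb : (1 - p / q) • (1:ℝ) + (p / q) • (1 + c * q) = 1 + c * p := by
    field_simp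
    linear_combination (p * c + 1) * mul_inv_cancel₀ hqe
  rw [hcomb, log_one, smul_eq_mul, smul_eq_mul, mul_zero, zero_add] at key
  rw [div_lt_div_iff₀ hq hp]
  have := mul_lt_mul_of_pos_right key hq
  calc Real.log (1 + c * q) * p = p / q * Real.log (1 + c * q) * q := by field_simp
    _ < Real.log (1 + c * p) * q := this

/-- For the single-user energy-efficiency constraint `log₂(1+h²p/σ²)/p ≥ e^min`,
the feasible set of positive powers is an interval `(0, P]`. -/
theorem ee_feasible_interval (h σ2 emin : ℝ) (hh : 0 < h) (hσ : 0 < σ2) (he : 0 < emin)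
    (hlim : emin < h ^ 2 / (σ2 * Real.log 2)) :
    ∃ P : ℝ, 0 < P ∧ ∀ p : ℝ, 0 < p →
      (emin ≤ Real.logb 2 (1 + h ^ 2 * p / σ2) / p ↔ p ≤ P) := by
  have hlog2 : (0:ℝ) < Real.log 2 := Real.log_pos (by norm_num)
  set c : ℝ := h ^ 2 / σ2 with hc_def
  have hc : 0 < c := by positivity
  set k : ℝ := emin * Real.log 2 with hk_def
  have hk : 0 < k := by positivity
  have hkc : k < c := by
    have : emin * (σ2 * Real.log 2) < h ^ 2 := by
      rw [← lt_div_iff₀ (by positivity)]; exact hlim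
    rw [hk_def, hc_def, lt_div_iff₀ hσ]
    nlinarith
  -- reformulation of the constraint
  have hiff : ∀ p : ℝ, 0 < p →
      (emin ≤ Real.logb 2 (1 + h ^ 2 * p / σ2) / p ↔ k * p ≤ Real.log (1 + c * p)) := by
    intro p hp
    have harg : 1 + h ^ 2 * p / σ2 = 1 + c * p := by rw [hc_def]; field_simp
    rw [harg, Real.logb, div_div, le_div_iff₀ (by positivity), hk_def]
    ring_nf
  -- feasibility for small p
  set p₁ : ℝ := (c - k) / (k * c) with hp₁_def
  have hp₁ : 0 < p₁ := div_pos (by linarith) (by positivity)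
  have hsmall : ∀ p : ℝ, 0 < p → p ≤ p₁ → k * p ≤ Real.log (1 + c * p) := by
    intro p hp hple
    have hx : (0:ℝ) < 1 + c * p := by nlinarith
    have h1 := Real.one_sub_inv_le_log_of_pos hx
    have hInv : (1 + c * p)⁻¹ = 1 / (1 + c * p) := by rw [one_div]
    have : k * p ≤ 1 - (1 + c * p)⁻¹ := by
      rw [hInv, sub_div' hx.ne', le_div_iff₀ hx]
      have : k * (1 + c * p) ≤ c := by
        have : k * c * p ≤ c - k := by
          rw [← le_div_iff₀' (by positivity : (0:ℝ) < k * c)]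
          exact hple
        nlinarith
      nlinarith
    linarith
  -- infeasibility for large p
  have htend : Tendsto (fun p : ℝ => Real.log (1 + c * p) / p) atTop (nhds 0) := by
    have h1 := Real.tendsto_pow_log_div_mul_add_atTop (1/c) (-(1/c)) 1 (by positivity)
    have h2 : Tendsto (fun p : ℝ => 1 + c * p) atTop atTop :=
      tendsto_atTop_add_const_left _ _ (tendsto_id.const_mul_atTop hc)
    have h3 := h1.comp h2
    have hev : ∀ᶠ p in atTop, (fun x => Real.log x ^ 1 / (1/c * x + -(1/c))) (1 + c * p)
        = Real.log (1 + c * p) / p := by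
      filter_upwards [eventually_gt_atTop 0] with p hp
      have hps : 1/c * (1 + c * p) + -(1/c) = p := by field_simp; ring
      simp only [pow_one, hps]
    exact Tendsto.congr' hev h3
  -- pick a point q where the constraint fails
  have hev : ∀ᶠ p in atTop, Real.log (1 + c * p) / p < k :=
    htend.eventually_lt_const hk
  obtain ⟨q, hq1, hq2⟩ := (hev.and (eventually_ge_atTop (p₁ + 1))).exists
  have hp₁q : p₁ < q := by linarith
  have hqpos : 0 < q := hp₁.trans hp₁q
  -- intermediate value theorem
  set G : ℝ → ℝ := fun p => Real.log (1 + c * p) - k * p with hG_def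
  have hcont : ContinuousOn G (Icc p₁ q) := by
    apply ContinuousOn.sub
    · apply ContinuousOn.log
      · fun_prop
      · intro x hx
        have : p₁ ≤ x := hx.1
        nlinarith
    · fun_prop
  have hGp₁ : 0 ≤ G p₁ := by
    have := hsmall p₁ hp₁ le_rfl
    simp only [hG_def]; linarith
  have hGq : G q ≤ 0 := by
    have : Real.log (1 + c * q) < k * q := by
      have := (div_lt_iff₀ hqpos).1 hq1
      linarith
    simp only [hG_def]; linarith
  obtain ⟨P, hPmem, hPG⟩ := intermediate_value_Icc' (le_of_lt hp₁q) hcont ⟨hGq, hGp₁⟩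
  have hPpos : 0 < P := lt_of_lt_of_le hp₁ hPmem.1
  have hPeq : Real.log (1 + c * P) = k * P := by
    have : G P = 0 := hPG
    simp only [hG_def] at this; linarith
  refine ⟨P, hPpos, fun p hp => ?_⟩
  rw [hiff p hp]
  constructor
  · intro hfeas
    by_contra hgt
    push_neg at hgt
    have := L_strictAnti hc hPpos hgt
    rw [hPeq] at this
    have hlt : Real.log (1 + c * p) / p < k := by
      have : k * P / P = k := by field_simp
      linarith [L_strictAnti hc hPpos hgt, this]
    have := (div_lt_iff₀ hp).1 hlt
    linarith
  · intro hle
    rcases eq_or_lt_of_le hle with rfl | hlt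
    · linarith [hPeq]
    · have := L_strictAnti hc hp hlt
      rw [hPeq] at this
      have hkP : k * P / P = k := by field_simp
      rw [hkP] at this
      have := (lt_div_iff₀ hp).1 this
      linarith
end

section
/- On the energy-efficiency boundary surface defined implicitly by log₂(1 + h_i² p_i / (Σ_{j=i+1}^M h_j² p_j + σ²)) = e_i^min · p_i with all h_j, σ², e_i^min > 0, the implicit derivative ∂p_i/∂p_j is ≤ 0 for every j with i+1 ≤ j ≤ M, at any point of the surface where p_i > 0. -/
open Finset

/-- On the energy-efficiency boundary surface
`log₂(1 + h_i² p_i / (Σ_{k>i} h_k² p_k + σ²)) = e_i^min p_i`, solving for `p_i` as a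
(differentiable) function `φ` of `p_j` (for `i < j ≤ M`, other coordinates fixed) gives
`∂p_i/∂p_j ≤ 0` at any surface point where `p_i > 0` and the implicit function theorem
applies (`∂F/∂p_i ≠ 0`). -/
theorem ee_surface_implicit_deriv_nonpos (M : ℕ) (h : Fin M → ℝ) (σ2 emin : ℝ)
    (hh : ∀ k, 0 < h k) (hσ : 0 < σ2) (he : 0 < emin)
    (i j : Fin M) (hij : i < j) (p : Fin M → ℝ) (hp : ∀ k, 0 ≤ p k)
    (φ : ℝ → ℝ)
    -- interference-plus-noise term as a function of `p_j = t`
    (I : ℝ → ℝ)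
    (hI : ∀ t, I t = (∑ k ∈ univ.filter (fun k => i < k ∧ k ≠ j), (h k) ^ 2 * p k)
        + (h j) ^ 2 * t + σ2)
    -- the surface equation holds along `φ` for all positive `p_j`
    (hsurf : ∀ t, 0 < t → Real.logb 2 (1 + (h i) ^ 2 * φ t / I t) = emin * φ t)
    (t₀ : ℝ) (ht₀ : 0 < t₀) (hφpos : 0 < φ t₀)
    (hdiff : DifferentiableAt ℝ φ t₀)
    -- nondegeneracy: `∂F/∂p_i ≠ 0` at the surface point
    (hnd : (h i) ^ 2 / ((I t₀ + (h i) ^ 2 * φ t₀) * Real.log 2) ≠ emin) :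
    deriv φ t₀ ≤ 0 := by
  set A := (h i) ^ 2 with hA
  set B := (h j) ^ 2 with hB
  set S := (∑ k ∈ univ.filter (fun k => i < k ∧ k ≠ j), (h k) ^ 2 * p k) with hS
  have hApos : 0 < A := pow_pos (hh i) 2
  have hBpos : 0 < B := pow_pos (hh j) 2
  have hSnn : 0 ≤ S := Finset.sum_nonneg (fun k _ => mul_nonneg (sq_nonneg _) (hp k))
  have hIfun : I = fun t => S + B * t + σ2 := funext hI
  have hI0pos : 0 < I t₀ := by
    rw [hIfun]; positivity
  set a := φ t₀ with ha
  set p' := deriv φ t₀ with hp'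
  set I0 := I t₀ with hI0
  have hI0ne : I0 ≠ 0 := ne_of_gt hI0pos
  have hlog2 : (0:ℝ) < Real.log 2 := Real.log_pos (by norm_num)
  -- derivative facts
  have hφd : HasDerivAt φ p' t₀ := hdiff.hasDerivAt
  have hId : HasDerivAt I B t₀ := by
    rw [hIfun]
    simpa using ((hasDerivAt_id t₀).const_mul B).const_add S |>.add_const σ2
  have hu : HasDerivAt (fun t => 1 + A * φ t / I t)
      ((A * p' * I0 - A * a * B) / I0 ^ 2) t₀ := by
    have := ((hφd.const_mul A).div hId hI0ne).const_add 1
    simpa using this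
  have hu0 : 1 + A * a / I0 = (I0 + A * a) / I0 := by field_simp
  have hu0pos : 0 < 1 + A * a / I0 := by positivity
  have hu0ne : (1 + A * a / I0) ≠ 0 := ne_of_gt hu0pos
  have hgd : HasDerivAt (fun t => Real.logb 2 (1 + A * φ t / I t))
      (((A * p' * I0 - A * a * B) / I0 ^ 2) / (1 + A * a / I0) / Real.log 2) t₀ := by
    have hlog : HasDerivAt (fun t => Real.log (1 + A * φ t / I t))
        (((A * p' * I0 - A * a * B) / I0 ^ 2) / (1 + A * a / I0)) t₀ := hu.log hu0ne
    have := hlog.div_const (Real.log 2)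
    simpa [Real.logb] using this
  -- the function equals emin * φ near t₀
  have heq : (fun t => Real.logb 2 (1 + A * φ t / I t)) =ᶠ[nhds t₀] fun t => emin * φ t := by
    filter_upwards [IsOpen.mem_nhds isOpen_Ioi (Set.mem_Ioi.mpr ht₀)] with t ht
    exact hsurf t ht
  have hderiv_eq : ((A * p' * I0 - A * a * B) / I0 ^ 2) / (1 + A * a / I0) / Real.log 2
      = emin * p' := by
    have h1 := hgd.deriv
    have h2 : deriv (fun t => Real.logb 2 (1 + A * φ t / I t)) t₀
        = deriv (fun t => emin * φ t) t₀ := heq.deriv_eq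
    have h3 : deriv (fun t => emin * φ t) t₀ = emin * p' := by
      rw [hp']; exact ((hφd.const_mul emin).deriv)
    rw [h1, h3] at h2; exact h2
  -- surface equation at t₀
  have hsurf0 : Real.log (1 + A * a / I0) = emin * a * Real.log 2 := by
    have h1 := hsurf t₀ ht₀
    rw [Real.logb, div_eq_iff (ne_of_gt hlog2)] at h1
    exact h1
  -- key inequality : log(1+x) > x/(1+x) for x = A*a/I0 > 0
  have hxpos : 0 < A * a / I0 := by positivity
  have hsum : 0 < I0 + A * a := by positivity
  have hkey : A * a / (I0 + A * a) < Real.log (1 + A * a / I0) := by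
    have h1x : (0:ℝ) < 1 / (1 + A * a / I0) := by positivity
    have hne1 : 1 / (1 + A * a / I0) ≠ 1 := by
      intro hc
      rw [div_eq_one_iff_eq hu0ne] at hc
      nlinarith
    have h2 := Real.log_lt_sub_one_of_pos h1x hne1
    rw [Real.log_div one_ne_zero hu0ne, Real.log_one] at h2
    have h3 : A * a / (I0 + A * a) = 1 - 1 / (1 + A * a / I0) := by
      field_simp; ring
    rw [h3]; linarith
  -- cross-multiplied derivative equation
  have hD : 0 < I0 * (I0 + A * a) * Real.log 2 := by positivity
  have hcross : A * p' * I0 - A * a * B = emin * p' * (I0 * (I0 + A * a) * Real.log 2) := by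
    have e1 : ((A * p' * I0 - A * a * B) / I0 ^ 2) / (1 + A * a / I0) / Real.log 2
        = (A * p' * I0 - A * a * B) / (I0 * (I0 + A * a) * Real.log 2) := by
      rw [hu0]; field_simp
    rw [e1, div_eq_iff (ne_of_gt hD)] at hderiv_eq
    exact hderiv_eq
  -- the coefficient is negative: A * I0 < emin * D
  have h5 : A * a < emin * a * Real.log 2 * (I0 + A * a) := by
    have := lt_of_lt_of_le hkey (le_of_eq hsurf0)
    rw [div_lt_iff₀ hsum] at this
    exact this
  have hAI0 : A * I0 < emin * (I0 * (I0 + A * a) * Real.log 2) := by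
    nlinarith [h5, hφpos, hI0pos]
  -- conclude
  by_contra hcon
  push_neg at hcon
  have h6 := mul_lt_mul_of_pos_left hAI0 hcon
  have h7 : 0 < A * a * B := mul_pos (mul_pos hApos hφpos) hBpos
  linarith [hcross, h6, h7]
end

section
/- Given a polyblock with vertex set T and a point x with x ≺ v for some v ∈ T, the set P' = P \ {y : y ≻ x} (removing the strictly dominating open upper cone K⁺_x = {y : y_i > x_i for all i}) is again a polyblock, with vertex set T' = (T \ T*) ∪ {v + (x_i − v_i)e^i : v ∈ T*, i = 1,…,N}, where T* = {v ∈ T : v ≻ x} and e^i is the i-th standard basis vector. -/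
open Finset

/-- Polyblock reduction step: removing the open upper cone `K⁺_x = {y : y ≻ x}` from a
polyblock with vertex set `T` yields the polyblock with vertex set
`T' = (T \ T*) ∪ {v + (x_i − v_i)e^i : v ∈ T*, i = 1,…,N}`, where `T* = {v ∈ T : v ≻ x}`. -/
theorem polyblock_remove_cone (N : ℕ) (T : Finset (Fin N → ℝ))
    (hTpos : ∀ v ∈ T, ∀ i, 0 ≤ v i)
    (x : Fin N → ℝ) (hx : ∀ i, 0 ≤ x i)
    (hdom : ∃ v ∈ T, ∀ i, x i < v i) :
    (⋃ v ∈ T, Set.Icc (0 : Fin N → ℝ) v) \ {y : Fin N → ℝ | ∀ i, x i < y i}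
      = ⋃ w ∈ ((T : Set (Fin N → ℝ)) \ {v ∈ (T : Set (Fin N → ℝ)) | ∀ i, x i < v i})
            ∪ (⋃ v ∈ {v ∈ (T : Set (Fin N → ℝ)) | ∀ i, x i < v i},
                ⋃ i : Fin N, {Function.update v i (x i)}),
          Set.Icc (0 : Fin N → ℝ) w := by
  ext y
  simp only [Set.mem_diff, Set.mem_iUnion, Set.mem_setOf_eq, Set.mem_union, Set.mem_sep_iff,
    Set.mem_singleton_iff, exists_prop, Set.mem_Icc]
  constructor
  · rintro ⟨⟨v, hv, h0, hvy⟩, hnot⟩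
    push_neg at hnot
    obtain ⟨i, hi⟩ := hnot
    by_cases hvstar : ∀ j, x j < v j
    · refine ⟨Function.update v i (x i), Or.inr ⟨v, ⟨hv, hvstar⟩, i, rfl⟩, h0, ?_⟩
      intro j
      by_cases hj : j = i
      · subst hj; simpa using hi
      · simpa [Function.update_of_ne hj] using hvy j
    · exact ⟨v, Or.inl ⟨hv, fun h => hvstar h.2⟩, h0, hvy⟩
  · rintro ⟨w, hw, h0, hwy⟩
    rcases hw with ⟨hwT, hwns⟩ | ⟨v, ⟨hvT, hvstar⟩, i, rfl⟩
    · refine ⟨⟨w, hwT, h0, hwy⟩, ?_⟩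
      intro hcone
      exact hwns ⟨hwT, fun j => lt_of_lt_of_le (hcone j) (hwy j)⟩
    · refine ⟨⟨v, hvT, h0, fun j => ?_⟩, fun hcone => ?_⟩
      · by_cases hj : j = i
        · subst hj
          exact le_trans (by simpa using hwy j) (le_of_lt (hvstar j))
        · simpa [Function.update_of_ne hj] using hwy j
      · exact absurd (lt_of_lt_of_le (hcone i) (by simpa using hwy i)) (lt_irrefl _)
end
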